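/- For any odd integer p and even integer q with 0 < |q| < p and gcd(p,q) = 1, the rational number p/q has a continued fraction expansion [2a_1, 2a_2, ..., 2a_{2n}] consisting of only nonzero even integers, where the number of partial quotients is even. -/

import Mathlib

/-- Value of a continued fraction `[a₁, …, aₙ] = a₁ + 1/(a₂ + 1/(⋯ + 1/aₙ))`,
evaluated in `ℚ` (with the convention `cfVal [] = 0`, so `cfVal [a] = a`). -/
def cfVal : List ℤ → ℚ
  | [] => 0
  | a :: l => a + (cfVal l)⁻¹

/-- Division with even quotient, assuming parities exclude exact odd-quotient division. -/
lemma even_quot_pos (p q : ℤ) (hq : 0 < q)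
    (hpar : (Odd p ∧ Even q) ∨ (Even p ∧ Odd q)) :
    ∃ a r : ℤ, Even a ∧ p = a * q + r ∧ |r| < q := by
  set a := p / q with ha
  set r := p % q with hr
  have hpq : p = a * q + r := by
    rw [ha, hr]; rw [mul_comm]; exact (Int.mul_ediv_add_emod p q).symm
  have hr0 : 0 ≤ r := Int.emod_nonneg p (ne_of_gt hq)
  have hrq : r < q := Int.emod_lt_of_pos p hq
  rcases Int.even_or_odd a with hea | hoa
  · exact ⟨a, r, hea, hpq, by rwa [abs_of_nonneg hr0]⟩
  · have hrne : r ≠ 0 := by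
      intro h0
      rw [h0, add_zero] at hpq
      rcases hpar with ⟨hop, heq⟩ | ⟨hep, hoq⟩
      · exact (Int.not_odd_iff_even.mpr (hpq ▸ heq.mul_left a)) hop
      · exact (Int.not_odd_iff_even.mpr (hpq ▸ hep)) (hoa.mul hoq)
    refine ⟨a + 1, r - q, ?_, by ring_nf; linarith [hpq], ?_⟩
    · exact Int.even_add_one.mpr (Int.not_even_iff_odd.mpr hoa)
    · have : 0 < r := lt_of_le_of_ne hr0 (Ne.symm hrne)
      rw [abs_of_nonpos (by linarith)]; linarith

lemma even_quot (p q : ℤ) (hq : q ≠ 0)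
    (hpar : (Odd p ∧ Even q) ∨ (Even p ∧ Odd q)) :
    ∃ a r : ℤ, Even a ∧ p = a * q + r ∧ |r| < |q| := by
  rcases lt_or_gt_of_ne hq with h | h
  · have hpar' : (Odd p ∧ Even (-q)) ∨ (Even p ∧ Odd (-q)) := by
      rcases hpar with ⟨h1, h2⟩ | ⟨h1, h2⟩
      · exact Or.inl ⟨h1, h2.neg⟩
      · exact Or.inr ⟨h1, h2.neg⟩
    obtain ⟨a, r, hea, hpq, hrq⟩ := even_quot_pos p (-q) (by linarith) hpar'
    exact ⟨-a, r, hea.neg, by linarith [hpq], by rwa [abs_of_neg h] ⟩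
  · obtain ⟨a, r, hea, hpq, hrq⟩ := even_quot_pos p q h hpar
    exact ⟨a, r, hea, hpq, by rwa [abs_of_pos h]⟩

lemma key : ∀ n : ℕ, ∀ p q : ℤ, q.natAbs ≤ n → Odd p → Even q →
    0 < |q| → |q| < p → IsCoprime p q →
    ∃ l : List ℤ, (∀ a ∈ l, a ≠ 0 ∧ Even a) ∧ Even l.length ∧
      cfVal l = (p : ℚ) / q := by
  intro n
  induction n with
  | zero =>
    intro p q hn _ _ h0 _ _
    have : q = 0 := Int.natAbs_eq_zero.mp (Nat.le_zero.mp hn)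
    simp [this] at h0
  | succ n ih =>
    intro p q hn hp hq h0 h1 hco
    have hqne : q ≠ 0 := by intro h; simp [h] at h0
    have hqQ : (q : ℚ) ≠ 0 := Int.cast_ne_zero.mpr hqne
    -- step 1
    obtain ⟨a, r, hea, hpq, hrq⟩ := even_quot p q hqne (Or.inl ⟨hp, hq⟩)
    have hor : Odd r := by
      have : r = p - a * q := by linarith
      rw [this]
      exact hp.sub_even (hq.mul_left a)
    have hrne : r ≠ 0 := by rintro rfl; exact (Int.not_odd_iff_even.mpr Even.zero) hor
    have hrQ : (r : ℚ) ≠ 0 := Int.cast_ne_zero.mpr hrne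
    have hpos : 0 < p := lt_of_le_of_lt (abs_nonneg q) h1
    have hane : a ≠ 0 := by
      rintro rfl
      rw [zero_mul, zero_add] at hpq
      subst hpq
      have : |p| < p := lt_trans hrq h1
      rw [abs_of_pos hpos] at this
      exact lt_irrefl p this
    have hcoqr : IsCoprime q r := by
      have h2 : r = p + (-a) * q := by linarith
      rw [h2]
      exact (hco.symm).add_mul_right_right (-a)
    -- step 2
    obtain ⟨b, s, heb, hqr, hsr⟩ := even_quot q r hrne (Or.inr ⟨hq, hor⟩)
    have hes : Even s := by
      have : s = q - b * r := by linarith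
      rw [this]
      exact hq.sub (heb.mul_right r)
    have hbne : b ≠ 0 := by
      rintro rfl
      rw [zero_mul, zero_add] at hqr
      subst hqr
      exact absurd (lt_trans hsr hrq) (lt_irrefl _)
    have hbQ : (b : ℚ) ≠ 0 := Int.cast_ne_zero.mpr hbne
    have hcors : IsCoprime r s := by
      have h2 : s = q + (-b) * r := by linarith
      rw [h2]
      exact (hcoqr.symm).add_mul_right_right (-b)
    have hpQ : (p : ℚ) = a * q + r := by exact_mod_cast congrArg (Int.cast : ℤ → ℚ) hpq
    have hqQ2 : (q : ℚ) = b * r + s := by exact_mod_cast congrArg (Int.cast : ℤ → ℚ) hqr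
    rcases eq_or_ne s 0 with hs0 | hsne
    · -- base case: r = ±1, list [a, b]
      subst hs0
      rw [add_zero] at hqr
      have hrunit : IsUnit r := hcoqr.isUnit_of_dvd' ⟨b, by linarith⟩ dvd_rfl
      have hr1 : r = 1 ∨ r = -1 := Int.isUnit_iff.mp hrunit
      refine ⟨[a, b], ?_, ⟨1, rfl⟩, ?_⟩
      · intro x hx
        simp only [List.mem_cons, List.mem_singleton] at hx
        rcases hx with rfl | hx
        · exact ⟨hane, hea⟩
        · simp at hx; subst hx; exact ⟨hbne, heb⟩
      · show (a : ℚ) + ((b : ℚ) + (cfVal [])⁻¹)⁻¹ = (p : ℚ) / q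
        rw [show cfVal [] = 0 from rfl, inv_zero, add_zero]
        rcases hr1 with rfl | rfl
        · have hq' : q = b := by linarith
          subst hq'
          rw [hpQ]
          push_cast
          field_simp
        · have hq' : q = -b := by linarith
          subst hq'
          rw [hpQ]
          push_cast
          rw [eq_div_iff (by simpa using hbQ : -(b:ℚ) ≠ 0)]
          field_simp
          ring
    · -- recursive case
      have hsQ : (s : ℚ) ≠ 0 := Int.cast_ne_zero.mpr hsne
      have hslt : s.natAbs ≤ n := by
        have h3 := hsr
        have h4 := hrq
        rw [Int.abs_eq_natAbs, Int.abs_eq_natAbs] at h3 h4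
        have h3' : s.natAbs < r.natAbs := by exact_mod_cast h3
        have h4' : r.natAbs < q.natAbs := by exact_mod_cast h4
        omega
      have habs : ∀ p' q' : ℤ, p' = r ∨ p' = -r → q' = s ∨ q' = -s →
          True := fun _ _ _ _ => trivial
      -- recurse, with sign normalization so numerator is positive
      obtain ⟨l', hl'mem, hl'len, hl'val⟩ :
          ∃ l : List ℤ, (∀ a ∈ l, a ≠ 0 ∧ Even a) ∧ Even l.length ∧
            cfVal l = (r : ℚ) / s := by
        rcases lt_or_gt_of_ne hrne with hrneg | hrpos
        · have := ih (-r) (-s) (by simpa using hslt) (by simpa using hor.neg)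
            (by simpa using hes.neg) (by simpa using abs_pos.mpr hsne)
            (by rw [abs_neg, abs_of_neg hrneg] at *; linarith [hsr])
            ((hcors.neg_left).neg_right)
          obtain ⟨l, hm, hl, hv⟩ := this
          refine ⟨l, hm, hl, ?_⟩
          rw [hv]; push_cast; rw [neg_div_neg_eq]
        · exact ih r s hslt hor hes (abs_pos.mpr hsne)
            (by rw [abs_of_pos hrpos] at *; linarith [hsr]) hcors
      have hval' : cfVal l' ≠ 0 := by rw [hl'val]; exact div_ne_zero hrQ hsQ
      refine ⟨a :: b :: l', ?_, ?_, ?_⟩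
      · intro x hx
        simp only [List.mem_cons] at hx
        rcases hx with rfl | rfl | hx
        · exact ⟨hane, hea⟩
        · exact ⟨hbne, heb⟩
        · exact hl'mem x hx
      · obtain ⟨k, hk⟩ := hl'len
        exact ⟨k + 1, by simp [List.length_cons, hk]; ring⟩
      · show (a : ℚ) + ((b : ℚ) + (cfVal l')⁻¹)⁻¹ = (p : ℚ) / q
        rw [hl'val]
        have h2 : ((r : ℚ) / s)⁻¹ = s / r := inv_div _ _
        have h3 : (b : ℚ) + s / r = q / r := by
          rw [hqQ2]; field_simp
        have h4 : ((q : ℚ) / r)⁻¹ = r / q := inv_div _ _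
        rw [h2, h3, h4, hpQ]
        field_simp

/-- Even expansion exists: any p/q with p odd, q even, 0 < |q| < p, gcd = 1 has a
continued fraction expansion with all entries nonzero even integers, of even length. -/
theorem even_expansion_exists (p q : ℤ) (hp : Odd p) (hq : Even q)
    (h0 : 0 < |q|) (h1 : |q| < p) (hco : IsCoprime p q) :
    ∃ l : List ℤ, (∀ a ∈ l, a ≠ 0 ∧ Even a) ∧ Even l.length ∧
      cfVal l = (p : ℚ) / q := by
  exact key q.natAbs p q le_rfl hp hq h0 h1 hco
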